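/- Let φ be a logically separable epistemic term in K_n and Q a set of propositional variables. Then the forgetting ∃Q.φ is logically equivalent to the conjunction of: (a) ∃Q.α for each α ∈ Prop(φ); (b) □_i(∃Q.β) for each agent i and each β ∈ Box_i(φ); and (c) ◇_i(∃Q.γ) for each agent i and each γ ∈ Diam_i(φ). -/

import Mathlib

universe u v

inductive Fm (A P : Type) : Type
  | tru : Fm A P
  | var : P → Fm A P
  | neg : Fm A P → Fm A P
  | and : Fm A P → Fm A P → Fm A P
  | box : A → Fm A P → Fm A P

namespace Fm
variable {A P : Type}
def or (φ ψ : Fm A P) : Fm A P := neg ((neg φ).and (neg ψ))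
def bot : Fm A P := neg tru
def dia (i : A) (φ : Fm A P) : Fm A P := neg (box i (neg φ))
end Fm

structure KM (A P : Type) where
  S : Type
  R : A → S → S → Prop
  V : S → P → Prop

variable {A P : Type}

def Sat (M : KM A P) : M.S → Fm A P → Prop
  | _, .tru => True
  | s, .var p => M.V s p
  | s, .neg φ => ¬ Sat M s φ
  | s, .and φ ψ => Sat M s φ ∧ Sat M s ψ
  | s, .box i φ => ∀ t, M.R i s t → Sat M t φ

def Satisfiable (φ : Fm A P) : Prop := ∃ (M : KM A P) (s : M.S), Sat M s φ

def Entails (φ ψ : Fm A P) : Prop := ∀ (M : KM A P) (s : M.S), Sat M s φ → Sat M s ψ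

def FEquiv (φ ψ : Fm A P) : Prop := Entails φ ψ ∧ Entails ψ φ

def IsProp : Fm A P → Prop
  | .tru => True
  | .var _ => True
  | .neg φ => IsProp φ
  | .and φ ψ => IsProp φ ∧ IsProp ψ
  | .box _ _ => False

def Basic (φ : Fm A P) : Prop :=
  IsProp φ ∨ (∃ i ψ, φ = Fm.box i ψ) ∨ (∃ i ψ, φ = Fm.dia i ψ)

def conj : List (Fm A P) → Fm A P
  | [] => Fm.tru
  | φ :: L => φ.and (conj L)

def disj : List (Fm A P) → Fm A P
  | [] => Fm.bot
  | φ :: L => φ.or (disj L)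

def EpTerm (L : List (Fm A P)) : Prop := ∀ c ∈ L, Basic c

def LogSep (L : List (Fm A P)) : Prop :=
  ∀ η : Fm A P, Basic η → Entails (conj L) η → ∃ α ∈ L, Entails α η

def fvars : Fm A P → Set P
  | .tru => ∅
  | .var p => {p}
  | .neg φ => fvars φ
  | .and φ ψ => fvars φ ∪ fvars ψ
  | .box _ φ => fvars φ

def fsize : Fm A P → ℕ
  | .tru => 1
  | .var _ => 1
  | .neg φ => fsize φ + 1
  | .and φ ψ => fsize φ + fsize ψ + 1
  | .box _ φ => fsize φ + 1

def IsForget (Q : Finset P) (φ ψ : Fm A P) : Prop :=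
  Entails φ ψ ∧ (∀ q ∈ Q, q ∉ fvars ψ) ∧
    ∀ η : Fm A P, (∀ q ∈ Q, q ∉ fvars η) → (Entails φ η ↔ Entails ψ η)

/-- Apply forgetting `F` inside modalities: a `□_i β` conjunct becomes `□_i (F β)`,
a `◇_i γ` conjunct becomes `◇_i (F γ)`, and a propositional conjunct `α` becomes `F α`. -/
def fmap (F : Fm A P → Fm A P) : Fm A P → Fm A P
  | .neg (.box i (.neg γ)) => Fm.dia i (F γ)
  | .box i β => Fm.box i (F β)
  | α => F α

/-! ### Basic semantic lemmas -/

theorem sat_neg {M : KM A P} {s : M.S} {χ : Fm A P} : Sat M s (Fm.neg χ) ↔ ¬ Sat M s χ := Iff.rfl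

theorem sat_and {M : KM A P} {s : M.S} {φ χ : Fm A P} :
    Sat M s (Fm.and φ χ) ↔ Sat M s φ ∧ Sat M s χ := Iff.rfl

theorem sat_box {M : KM A P} {s : M.S} {i : A} {χ : Fm A P} :
    Sat M s (Fm.box i χ) ↔ ∀ t, M.R i s t → Sat M t χ := Iff.rfl

theorem sat_dia {M : KM A P} {s : M.S} {i : A} {χ : Fm A P} :
    Sat M s (Fm.dia i χ) ↔ ∃ t, M.R i s t ∧ Sat M t χ := by
  show (¬ ∀ t, M.R i s t → ¬ Sat M t χ) ↔ _
  push_neg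
  rfl

theorem sat_conj {M : KM A P} {s : M.S} (L : List (Fm A P)) :
    Sat M s (conj L) ↔ ∀ c ∈ L, Sat M s c := by
  induction L with
  | nil => exact ⟨fun _ c hc => absurd hc List.not_mem_nil, fun _ => trivial⟩
  | cons c L ih =>
    show Sat M s c ∧ Sat M s (conj L) ↔ _
    rw [ih]
    constructor
    · rintro ⟨h1, h2⟩ e he
      rcases List.mem_cons.mp he with rfl | he
      exacts [h1, h2 e he]
    · intro h
      exact ⟨h c (List.mem_cons_self), fun e he => h e (List.mem_cons_of_mem _ he)⟩

theorem entails_box_mono {β θ : Fm A P} (i : A) (h : Entails β θ) :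
    Entails (Fm.box i β) (Fm.box i θ) := by
  intro M s hs t ht
  exact h M t (hs t ht)

theorem entails_dia_mono {β θ : Fm A P} (i : A) (h : Entails β θ) :
    Entails (Fm.dia i β) (Fm.dia i θ) := by
  intro M s hs
  rw [sat_dia] at hs ⊢
  obtain ⟨t, ht, hb⟩ := hs
  exact ⟨t, ht, h M t hb⟩

/-! ### Bounded morphisms and model constructions -/

structure BM (M N : KM A P) (f : M.S → N.S) : Prop where
  hv : ∀ s p, M.V s p ↔ N.V (f s) p
  hf : ∀ i s t, M.R i s t → N.R i (f s) (f t)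
  hb : ∀ i s u, N.R i (f s) u → ∃ t, M.R i s t ∧ u = f t

theorem BM.sat {M N : KM A P} {f : M.S → N.S} (h : BM M N f) (χ : Fm A P) :
    ∀ s, Sat M s χ ↔ Sat N (f s) χ := by
  induction χ with
  | tru => intro s; exact Iff.rfl
  | var p => intro s; exact h.hv s p
  | neg φ ih => intro s; exact not_congr (ih s)
  | and φ χ ih1 ih2 => intro s; exact and_congr (ih1 s) (ih2 s)
  | box i φ ih =>
    intro s
    constructor
    · intro hs u hu
      obtain ⟨t, ht, rfl⟩ := h.hb i s u hu
      exact (ih t).mp (hs t ht)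
    · intro hs t ht
      exact (ih t).mpr (hs (f t) (h.hf i s t ht))

def pmod (v : P → Prop) : KM A P := ⟨Unit, fun _ _ _ => False, fun _ => v⟩

def msum (M N : KM A P) : KM A P where
  S := M.S ⊕ N.S
  R i x y := match x, y with
    | .inl a, .inl b => M.R i a b
    | .inr a, .inr b => N.R i a b
    | _, _ => False
  V x p := match x with | .inl a => M.V a p | .inr b => N.V b p

def aug (K : KM A P) (v₀ : P → Prop) (E : A → K.S → Prop) : KM A P where
  S := Option K.S
  R i x y := match x, y with
    | none, some t => E i t
    | some a, some b => K.R i a b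
    | _, _ => False
  V x p := match x with | none => v₀ p | some a => K.V a p

theorem bm_inl (M N : KM A P) : BM M (msum M N) Sum.inl := by
  refine ⟨fun _ _ => Iff.rfl, fun _ _ _ h => h, fun i s u hu => ?_⟩
  cases u with
  | inl b => exact ⟨b, hu, rfl⟩
  | inr b => exact hu.elim

theorem bm_inr (M N : KM A P) : BM N (msum M N) Sum.inr := by
  refine ⟨fun _ _ => Iff.rfl, fun _ _ _ h => h, fun i s u hu => ?_⟩
  cases u with
  | inl b => exact hu.elim
  | inr b => exact ⟨b, hu, rfl⟩

theorem bm_some (K : KM A P) (v₀ : P → Prop) (E : A → K.S → Prop) :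
    BM K (aug K v₀ E) some := by
  refine ⟨fun _ _ => Iff.rfl, fun _ _ _ h => h, fun i s u hu => ?_⟩
  cases u with
  | none => exact hu.elim
  | some b => exact ⟨b, hu, rfl⟩

/-! ### Propositional formulas only depend on the valuation -/

theorem sat_isProp {φ : Fm A P} (h : IsProp φ) {M : KM A P} {s : M.S} {N : KM A P} {t : N.S}
    (hv : ∀ p ∈ fvars φ, M.V s p ↔ N.V t p) : Sat M s φ ↔ Sat N t φ := by
  induction φ with
  | tru => exact Iff.rfl
  | var p => exact hv p rfl
  | neg φ ih => exact not_congr (ih h hv)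
  | and φ χ ih1 ih2 =>
    exact and_congr (ih1 h.1 fun p hp => hv p (Set.mem_union_left _ hp))
      (ih2 h.2 fun p hp => hv p (Set.mem_union_right _ hp))
  | box i φ ih => exact h.elim
/-! ### Variable lists and diagrams -/

def varList : Fm A P → List P
  | .tru => []
  | .var p => [p]
  | .neg φ => varList φ
  | .and φ ψ => varList φ ++ varList ψ
  | .box _ φ => varList φ

theorem fvars_sub_varList (φ : Fm A P) : ∀ p ∈ fvars φ, p ∈ varList φ := by
  induction φ with
  | tru => intro p hp; exact hp.elim
  | var q => intro p hp; simpa [varList, fvars] using hp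
  | neg φ ih => exact ih
  | and φ ψ ih1 ih2 =>
    intro p hp
    rcases hp with hp | hp
    · exact List.mem_append_left _ (ih1 p hp)
    · exact List.mem_append_right _ (ih2 p hp)
  | box i φ ih => exact ih

theorem mem_varList_conj {L : List (Fm A P)} {c : Fm A P} (hc : c ∈ L) :
    ∀ p ∈ fvars c, p ∈ varList (conj L) := by
  induction L with
  | nil => exact absurd hc List.not_mem_nil
  | cons e L ih =>
    intro p hp
    rcases List.mem_cons.mp hc with rfl | hc'
    · exact List.mem_append_left _ (fvars_sub_varList c p hp)
    · exact List.mem_append_right _ (ih hc' p hp)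

theorem fvars_conj {L : List (Fm A P)} : ∀ p ∈ fvars (conj L), ∃ e ∈ L, p ∈ fvars e := by
  induction L with
  | nil => intro p hp; exact hp.elim
  | cons e L ih =>
    intro p hp
    rcases hp with hp | hp
    · exact ⟨e, List.mem_cons_self, hp⟩
    · obtain ⟨e', he', hp'⟩ := ih p hp
      exact ⟨e', List.mem_cons_of_mem _ he', hp'⟩

theorem isProp_conj {L : List (Fm A P)} (h : ∀ e ∈ L, IsProp e) : IsProp (conj L) := by
  induction L with
  | nil => exact trivial
  | cons e L ih =>
    exact ⟨h e (List.mem_cons_self), ih fun x hx => h x (List.mem_cons_of_mem _ hx)⟩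

open Classical in
noncomputable def lit (v : P → Prop) (p : P) : Fm A P :=
  if v p then Fm.var p else Fm.neg (Fm.var p)

noncomputable def diag (v : P → Prop) (l : List P) : Fm A P := conj (l.map (lit v))

theorem isProp_lit (v : P → Prop) (p : P) : IsProp (lit (A := A) v p) := by
  unfold lit; split <;> trivial

theorem fvars_lit (v : P → Prop) (p : P) : ∀ q ∈ fvars (lit (A := A) v p), q = p := by
  unfold lit; split <;> · intro q hq; simpa [fvars] using hq

theorem isProp_diag (v : P → Prop) (l : List P) : IsProp (diag (A := A) v l) := by
  apply isProp_conj
  intro e he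
  obtain ⟨p, _, rfl⟩ := List.mem_map.mp he
  exact isProp_lit v p

theorem fvars_diag (v : P → Prop) (l : List P) : ∀ q ∈ fvars (diag (A := A) v l), q ∈ l := by
  intro q hq
  obtain ⟨e, he, hqe⟩ := fvars_conj q hq
  obtain ⟨p, hp, rfl⟩ := List.mem_map.mp he
  have hqp := fvars_lit v p q hqe
  subst hqp
  exact hp

theorem sat_lit {M : KM A P} {s : M.S} (v : P → Prop) (p : P) :
    Sat M s (lit v p) ↔ (M.V s p ↔ v p) := by
  unfold lit
  split
  · next h => show M.V s p ↔ _; tauto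
  · next h => show ¬ M.V s p ↔ _; tauto

theorem sat_diag {M : KM A P} {s : M.S} (v : P → Prop) (l : List P) :
    Sat M s (diag v l) ↔ ∀ p ∈ l, (M.V s p ↔ v p) := by
  rw [diag, sat_conj]
  constructor
  · intro h p hp
    exact (sat_lit v p).mp (h _ (List.mem_map_of_mem hp))
  · intro h e he
    obtain ⟨p, hp, rfl⟩ := List.mem_map.mp he
    exact (sat_lit v p).mpr (h p hp)

/-! ### Finitely satisfiable sets and the canonical model -/

def FSat (Γ : Set (Fm A P)) : Prop :=
  ∀ l : List (Fm A P), (∀ χ ∈ l, χ ∈ Γ) → ∃ (M : KM A P) (s : M.S), ∀ χ ∈ l, Sat M s χ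

theorem chain_list {c : Set (Set (Fm A P))} (hc : IsChain (· ⊆ ·) c) (hne : c.Nonempty) :
    ∀ l : List (Fm A P), (∀ χ ∈ l, ∃ t ∈ c, χ ∈ t) → ∃ t ∈ c, ∀ χ ∈ l, χ ∈ t := by
  intro l
  induction l with
  | nil =>
    intro _
    obtain ⟨t, ht⟩ := hne
    exact ⟨t, ht, by simp⟩
  | cons χ l ih =>
    intro h
    obtain ⟨t, htc, hall⟩ := ih fun x hx => h x (List.mem_cons_of_mem _ hx)
    obtain ⟨t', ht'c, hχ⟩ := h χ (List.mem_cons_self)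
    rcases eq_or_ne t t' with rfl | hne'
    · refine ⟨t, htc, ?_⟩
      intro x hx
      rcases List.mem_cons.mp hx with rfl | hx
      exacts [hχ, hall x hx]
    · rcases hc htc ht'c hne' with hsub | hsub
      · refine ⟨t', ht'c, ?_⟩
        intro x hx
        rcases List.mem_cons.mp hx with rfl | hx
        exacts [hχ, hsub (hall x hx)]
      · refine ⟨t, htc, ?_⟩
        intro x hx
        rcases List.mem_cons.mp hx with rfl | hx
        exacts [hsub hχ, hall x hx]

structure MCS (A P : Type) : Type where
  s : Set (Fm A P)
  fsat : FSat s
  max : ∀ χ, FSat (insert χ s) → χ ∈ s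

theorem mcs_exists {Γ : Set (Fm A P)} (h : FSat Γ) : ∃ w : MCS A P, Γ ⊆ w.s := by
  have hch : ∀ c ⊆ {Γ' : Set (Fm A P) | FSat Γ'}, IsChain (· ⊆ ·) c → c.Nonempty →
      ∃ ub ∈ {Γ' : Set (Fm A P) | FSat Γ'}, ∀ s ∈ c, s ⊆ ub := by
    intro c hcS hchain hne
    refine ⟨⋃₀ c, ?_, fun s hs => Set.subset_sUnion_of_mem hs⟩
    intro l hl
    obtain ⟨t, htc, hall⟩ := chain_list hchain hne l fun χ hχ => Set.mem_sUnion.mp (hl χ hχ)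
    exact hcS htc l hall
  obtain ⟨m, hm, hmax⟩ := zorn_subset_nonempty {Γ' : Set (Fm A P) | FSat Γ'} hch Γ h
  refine ⟨⟨m, hmax.1, fun χ hχ => ?_⟩, hm⟩
  exact hmax.2 hχ (Set.subset_insert χ m) (Set.mem_insert χ m)

theorem MCS.mem_of (w : MCS A P) (l : List (Fm A P)) (hl : ∀ ψ ∈ l, ψ ∈ w.s) (χ : Fm A P)
    (h : ∀ (M : KM A P) (s : M.S), (∀ ψ ∈ l, Sat M s ψ) → Sat M s χ) : χ ∈ w.s := by
  classical
  apply w.max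
  intro l₀ hl₀
  have hsub : ∀ ψ ∈ l ++ l₀.filter (fun e => decide (e ∈ w.s)), ψ ∈ w.s := by
    intro ψ hψ
    rcases List.mem_append.mp hψ with h1 | h1
    · exact hl ψ h1
    · simpa using (List.mem_filter.mp h1).2
  obtain ⟨M, s, hs⟩ := w.fsat _ hsub
  refine ⟨M, s, fun e he => ?_⟩
  rcases Set.mem_insert_iff.mp (hl₀ e he) with rfl | he'
  · exact h M s fun ψ hψ => hs ψ (List.mem_append_left _ hψ)
  · exact hs e (List.mem_append_right _ (List.mem_filter.mpr ⟨he, by simpa using he'⟩))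

theorem MCS.not_both (w : MCS A P) {χ : Fm A P} (h1 : χ ∈ w.s) (h2 : Fm.neg χ ∈ w.s) : False := by
  obtain ⟨M, s, hs⟩ := w.fsat [χ, Fm.neg χ] (by
    intro x hx
    simp only [List.mem_cons, List.mem_singleton, List.not_mem_nil, or_false] at hx
    rcases hx with rfl | rfl
    exacts [h1, h2])
  exact (hs (Fm.neg χ) (by simp)) (hs χ (by simp))

theorem MCS.neg_mem (w : MCS A P) (χ : Fm A P) : Fm.neg χ ∈ w.s ↔ χ ∉ w.s := by
  constructor
  · intro h hc
    exact w.not_both hc h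
  · intro h
    by_contra hn
    have h1 : ¬ FSat (insert χ w.s) := fun hf => h (w.max _ hf)
    have h2 : ¬ FSat (insert (Fm.neg χ) w.s) := fun hf => hn (w.max _ hf)
    rw [FSat] at h1 h2
    push_neg at h1 h2
    obtain ⟨l₁, hl₁, hm₁⟩ := h1
    obtain ⟨l₂, hl₂, hm₂⟩ := h2
    classical
    obtain ⟨M, s, hs⟩ := w.fsat ((l₁ ++ l₂).filter (fun e => decide (e ∈ w.s)))
      (fun e he => by simpa using (List.mem_filter.mp he).2)
    by_cases hsχ : Sat M s χ
    · obtain ⟨e, he, hne⟩ := hm₁ M s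
      apply hne
      rcases Set.mem_insert_iff.mp (hl₁ e he) with rfl | he'
      · exact hsχ
      · exact hs e (List.mem_filter.mpr ⟨List.mem_append_left _ he, by simpa using he'⟩)
    · obtain ⟨e, he, hne⟩ := hm₂ M s
      apply hne
      rcases Set.mem_insert_iff.mp (hl₂ e he) with rfl | he'
      · exact hsχ
      · exact hs e (List.mem_filter.mpr ⟨List.mem_append_right _ he, by simpa using he'⟩)

def canon (A P : Type) : KM A P where
  S := MCS A P
  R i w v := ∀ χ, Fm.box i χ ∈ w.s → χ ∈ v.s
  V w p := Fm.var p ∈ w.s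

theorem truth_lemma : ∀ (φ : Fm A P) (w : MCS A P), Sat (canon A P) w φ ↔ φ ∈ w.s := by
  intro φ
  induction φ with
  | tru =>
    intro w
    simp only [Sat, true_iff]
    exact w.mem_of [] (by simp) _ (fun M s _ => trivial)
  | var p => intro w; exact Iff.rfl
  | neg φ ih =>
    intro w
    exact (not_congr (ih w)).trans (MCS.neg_mem w φ).symm
  | and φ χ ih1 ih2 =>
    intro w
    refine (and_congr (ih1 w) (ih2 w)).trans ?_
    constructor
    · rintro ⟨h1, h2⟩
      refine w.mem_of [φ, χ] ?_ _ (fun M s hs => ⟨hs φ (by simp), hs χ (by simp)⟩)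
      intro x hx
      simp only [List.mem_cons, List.mem_singleton, List.not_mem_nil, or_false] at hx
      rcases hx with rfl | rfl
      exacts [h1, h2]
    · intro h
      constructor
      · exact w.mem_of [Fm.and φ χ] (by simpa using h) φ
          (fun M s hs => (sat_and.mp (hs (Fm.and φ χ) (by simp))).1)
      · exact w.mem_of [Fm.and φ χ] (by simpa using h) χ
          (fun M s hs => (sat_and.mp (hs (Fm.and φ χ) (by simp))).2)
  | box i φ ih =>
    intro w
    constructor
    · intro hs
      by_contra hn
      have hneg : Fm.neg (Fm.box i φ) ∈ w.s := (w.neg_mem _).mpr hn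
      have hfs : FSat (insert (Fm.neg φ) {χ : Fm A P | Fm.box i χ ∈ w.s}) := by
        intro l hl
        classical
        have hsub : ∀ e ∈ Fm.neg (Fm.box i φ) ::
            (l.filter (fun e => decide (Fm.box i e ∈ w.s))).map (Fm.box i), e ∈ w.s := by
          intro e he
          rcases List.mem_cons.mp he with rfl | he'
          · exact hneg
          · obtain ⟨x, hx, rfl⟩ := List.mem_map.mp he'
            simpa using (List.mem_filter.mp hx).2
        obtain ⟨M, s, hsat⟩ := w.fsat _ hsub
        have hsneg : ¬ Sat M s (Fm.box i φ) := hsat _ (List.mem_cons_self)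
        rw [sat_box] at hsneg
        push_neg at hsneg
        obtain ⟨t, hrt, hnφ⟩ := hsneg
        refine ⟨M, t, ?_⟩
        intro e he
        rcases Set.mem_insert_iff.mp (hl e he) with rfl | he'
        · exact hnφ
        · have hmem : e ∈ l.filter (fun e => decide (Fm.box i e ∈ w.s)) :=
            List.mem_filter.mpr ⟨he, by simpa using he'⟩
          have := hsat (Fm.box i e) (List.mem_cons_of_mem _ (List.mem_map_of_mem hmem))
          exact this t hrt
      obtain ⟨v, hv⟩ := mcs_exists hfs
      have hR : (canon A P).R i w v := fun χ hχ => hv (Set.mem_insert_of_mem _ hχ)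
      exact v.not_both ((ih v).mp (hs v hR)) (hv (Set.mem_insert _ _))
    · intro hmem v hR
      exact (ih v).mpr (hR φ hmem)
/-! ### fmap equations -/

theorem fmap_isProp {F : Fm A P → Fm A P} {c : Fm A P} (h : IsProp c) : fmap F c = F c := by
  cases c with
  | tru => rfl
  | var p => rfl
  | and φ χ => rfl
  | box i φ => exact h.elim
  | neg x =>
    cases x with
    | tru => rfl
    | var p => rfl
    | and φ χ => rfl
    | neg y => rfl
    | box i y => exact (h : IsProp (Fm.box i y)).elim

theorem fmap_box {F : Fm A P → Fm A P} (i : A) (β : Fm A P) :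
    fmap F (Fm.box i β) = Fm.box i (F β) := rfl

theorem fmap_dia {F : Fm A P → Fm A P} (i : A) (γ : Fm A P) :
    fmap F (Fm.dia i γ) = Fm.dia i (F γ) := rfl

/-! ### Satisfaction at the root of an augmented model -/

theorem aug_root_box_iff {K : KM A P} {v₀ : P → Prop} {E : A → K.S → Prop} {i : A} {χ : Fm A P} :
    Sat (aug K v₀ E) none (Fm.box i χ) ↔ ∀ t, E i t → Sat K t χ := by
  refine sat_box.trans ?_
  constructor
  · intro h t ht
    exact ((bm_some K v₀ E).sat χ t).mpr (h (some t) ht)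
  · intro h t ht
    cases t with
    | none => exact ht.elim
    | some u => exact ((bm_some K v₀ E).sat χ u).mp (h u ht)

theorem aug_root_dia_iff {K : KM A P} {v₀ : P → Prop} {E : A → K.S → Prop} {i : A} {χ : Fm A P} :
    Sat (aug K v₀ E) none (Fm.dia i χ) ↔ ∃ t, E i t ∧ Sat K t χ := by
  refine sat_dia.trans ?_
  constructor
  · rintro ⟨t, ht, hs⟩
    cases t with
    | none => exact ht.elim
    | some u => exact ⟨u, ht, ((bm_some K v₀ E).sat χ u).mpr hs⟩
  · rintro ⟨t, ht, hs⟩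
    exact ⟨some t, ht, ((bm_some K v₀ E).sat χ t).mp hs⟩

/-! ### The per-conjunct transfer lemma -/

theorem lemT (Q : Finset P) (F : Fm A P → Fm A P) (hF : ∀ χ : Fm A P, IsForget Q χ (F χ))
    {c η : Fm A P} (hc : Basic c) (hη : Basic η) (hQ : ∀ q ∈ Q, q ∉ fvars η)
    (h : Entails c η) : Entails (fmap F c) η := by
  rcases hc with hcp | ⟨i, β, rfl⟩ | ⟨i, γ, rfl⟩
  · rw [fmap_isProp hcp]
    exact ((hF c).2.2 η hQ).mp h
  · -- c = box i β
    rw [fmap_box]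
    rcases hη with hηp | ⟨j, θ, rfl⟩ | ⟨j, θ, rfl⟩
    · -- η propositional
      intro K k hk
      have h1 : Sat (pmod (K.V k) : KM A P) () (Fm.box i β) := fun t ht => ht.elim
      have h2 : Sat (pmod (K.V k) : KM A P) () η := h _ () h1
      exact (sat_isProp hηp (fun p _ => Iff.rfl) :
        Sat (pmod (K.V k) : KM A P) () η ↔ Sat K k η).mp h2
    · -- η = box j θ
      by_cases hij : i = j
      · subst hij
        have hβθ : Entails β θ := by
          intro K k hk
          have hroot : Sat (aug K (fun _ => False) (fun a t => a = i ∧ t = k)) none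
              (Fm.box i β) := aug_root_box_iff.mpr (by rintro t ⟨-, rfl⟩; exact hk)
          have hb := h (aug K (fun _ => False) (fun a t => a = i ∧ t = k)) none hroot
          rw [aug_root_box_iff] at hb
          exact hb k ⟨rfl, rfl⟩
        exact entails_box_mono i (((hF β).2.2 θ hQ).mp hβθ)
      · -- i ≠ j : θ is valid
        have hv : ∀ (K : KM A P) (k : K.S), Sat K k θ := by
          intro K k
          have hroot : Sat (aug K (fun _ => False) (fun a t => a = j ∧ t = k)) none
              (Fm.box i β) := aug_root_box_iff.mpr (by rintro t ⟨ha, -⟩; exact absurd ha hij)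
          have hb := h (aug K (fun _ => False) (fun a t => a = j ∧ t = k)) none hroot
          rw [aug_root_box_iff] at hb
          exact hb k ⟨rfl, rfl⟩
        intro K k _ t _
        exact hv K t
    · -- η = dia j θ : impossible
      exfalso
      have h1 : Sat (pmod (fun _ => False) : KM A P) () (Fm.box i β) := fun t ht => ht.elim
      have h2 := h (pmod (fun _ => False)) () h1
      replace h2 := sat_dia.mp h2
      obtain ⟨t, ht, -⟩ := h2
      exact ht
  · -- c = dia i γ
    rw [fmap_dia]
    by_cases hsat : Satisfiable γ
    · obtain ⟨N₀, u₀, h0⟩ := hsat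
      rcases hη with hηp | ⟨j, θ, rfl⟩ | ⟨j, θ, rfl⟩
      · -- η propositional
        intro K k hk
        have hroot : Sat (aug N₀ (K.V k) (fun a t => a = i ∧ t = u₀)) none (Fm.dia i γ) :=
          aug_root_dia_iff.mpr ⟨u₀, ⟨rfl, rfl⟩, h0⟩
        have h2 := h (aug N₀ (K.V k) (fun a t => a = i ∧ t = u₀)) none hroot
        exact (sat_isProp hηp (fun p _ => Iff.rfl) :
          Sat (aug N₀ (K.V k) (fun a t => a = i ∧ t = u₀)) none η ↔ Sat K k η).mp h2
      · -- η = box j θ : θ valid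
        have hv : ∀ (K : KM A P) (k : K.S), Sat K k θ := by
          intro K k
          have hroot : Sat (aug (msum N₀ K) (fun _ => False)
              (fun a x => (a = i ∧ x = Sum.inl u₀) ∨ (a = j ∧ x = Sum.inr k))) none
              (Fm.dia i γ) :=
            aug_root_dia_iff.mpr ⟨Sum.inl u₀, Or.inl ⟨rfl, rfl⟩, ((bm_inl N₀ K).sat γ u₀).mp h0⟩
          have hb := h (aug (msum N₀ K) (fun _ => False)
              (fun a x => (a = i ∧ x = Sum.inl u₀) ∨ (a = j ∧ x = Sum.inr k))) none hroot
          rw [aug_root_box_iff] at hb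
          exact ((bm_inr N₀ K).sat θ k).mpr (hb (Sum.inr k) (Or.inr ⟨rfl, rfl⟩))
        intro K k _ t _
        exact hv K t
      · -- η = dia j θ
        by_cases hij : i = j
        · subst hij
          have hγθ : Entails γ θ := by
            intro K k hk
            have hroot : Sat (aug K (fun _ => False) (fun a t => a = i ∧ t = k)) none
                (Fm.dia i γ) := aug_root_dia_iff.mpr ⟨k, ⟨rfl, rfl⟩, hk⟩
            have hd := h (aug K (fun _ => False) (fun a t => a = i ∧ t = k)) none hroot
            rw [aug_root_dia_iff] at hd
            obtain ⟨t, ⟨-, rfl⟩, hθ⟩ := hd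
            exact hθ
          exact entails_dia_mono i (((hF γ).2.2 θ hQ).mp hγθ)
        · exfalso
          have hroot : Sat (aug N₀ (fun _ => False) (fun a t => a = i ∧ t = u₀)) none
              (Fm.dia i γ) := aug_root_dia_iff.mpr ⟨u₀, ⟨rfl, rfl⟩, h0⟩
          have hd := h (aug N₀ (fun _ => False) (fun a t => a = i ∧ t = u₀)) none hroot
          rw [aug_root_dia_iff] at hd
          obtain ⟨t, ⟨ha, -⟩, -⟩ := hd
          exact hij ha.symm
    · -- γ unsatisfiable
      have hbot : Entails (F γ) Fm.bot :=
        ((hF γ).2.2 Fm.bot (fun q _ hx => hx)).mp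
          (fun M s hs => absurd ⟨M, s, hs⟩ hsat)
      intro K k hk
      exfalso
      rw [sat_dia] at hk
      obtain ⟨t, -, hFγ⟩ := hk
      exact (hbot K t hFγ) trivial
/-! ### Separability-based transfer of basic consequences -/

theorem sep_transfer (L : List (Fm A P)) (hterm : EpTerm L) (hsep : LogSep L)
    (Q : Finset P) (F : Fm A P → Fm A P) (hF : ∀ χ : Fm A P, IsForget Q χ (F χ))
    {η : Fm A P} (hb : Basic η) (hQ : ∀ q ∈ Q, q ∉ fvars η)
    (h : Entails (conj L) η) : Entails (conj (L.map (fmap F))) η := by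
  obtain ⟨c, hcL, hce⟩ := hsep η hb h
  have ht := lemT Q F hF (hterm c hcL) hb hQ hce
  intro M s hs
  exact ht M s ((sat_conj _).mp hs (fmap F c) (List.mem_map_of_mem hcL))

/-- The set of canonical worlds suitable as `i`-successors of the new root. -/
def DiSet (L : List (Fm A P)) (Q : Finset P) (M : KM A P) (s : M.S) (i : A) : Set (MCS A P) :=
  {w | (∀ β, Fm.box i β ∈ L → β ∈ w.s) ∧
    (∀ χ, (∀ q ∈ Q, q ∉ fvars χ) → Sat M s (Fm.box i χ) → χ ∈ w.s)}

/-! ### The main model construction -/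

theorem main_construct (L : List (Fm A P)) (hterm : EpTerm L) (hsep : LogSep L)
    (Q : Finset P) (F : Fm A P → Fm A P) (hF : ∀ χ : Fm A P, IsForget Q χ (F χ))
    (M : KM A P) (s : M.S) (hs : Sat M s (conj (L.map (fmap F)))) :
    ∃ (N : KM A P) (r : N.S), Sat N r (conj L) ∧
      ∀ χ : Fm A P, (∀ q ∈ Q, q ∉ fvars χ) → (Sat M s χ ↔ Sat N r χ) := by
  classical
  have hkey : ∀ η : Fm A P, Basic η → (∀ q ∈ Q, q ∉ fvars η) → Entails (conj L) η →
      Sat M s η :=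
    fun η hb hq he => sep_transfer L hterm hsep Q F hF hb hq he M s hs
  -- Step 1: the root valuation
  have hv' : ∃ v' : P → Prop, (∀ p, p ∉ Q → (v' p ↔ M.V s p)) ∧
      (∀ α ∈ L, IsProp α → Sat (pmod v' : KM A P) () α) := by
    by_contra hno
    push_neg at hno
    set lv : List P := (varList (conj L)).filter (fun p => decide (p ∉ Q)) with hlv
    set D : Fm A P := diag (M.V s) lv with hD
    have hent : Entails (conj L) (Fm.neg D) := by
      intro K k hK
      rw [sat_neg]
      intro hKD
      rw [hD, sat_diag] at hKD
      obtain ⟨α, hαL, hαp, hαns⟩ := hno (fun p => if p ∈ Q then K.V k p else M.V s p)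
        (fun p hp => by simp [hp])
      apply hαns
      have hvagree : ∀ p ∈ fvars α, K.V k p ↔ (if p ∈ Q then K.V k p else M.V s p) := by
        intro p hp
        by_cases hpQ : p ∈ Q
        · simp [hpQ]
        · simp only [hpQ, if_false]
          have hplv : p ∈ lv := by
            rw [hlv]
            exact List.mem_filter.mpr ⟨mem_varList_conj hαL p hp, by simpa using hpQ⟩
          exact hKD p hplv
      have hKα : Sat K k α := (sat_conj L).mp hK α hαL
      exact (sat_isProp hαp hvagree :
        Sat K k α ↔ Sat (pmod (fun p => if p ∈ Q then K.V k p else M.V s p) : KM A P) () α).mp hKα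
    have hbasic : Basic (Fm.neg D) := Or.inl (isProp_diag (M.V s) lv)
    have hqf : ∀ q ∈ Q, q ∉ fvars (Fm.neg D) := by
      intro q hq hmem
      have h1 : q ∈ lv := fvars_diag (M.V s) lv q hmem
      rw [hlv] at h1
      have h2 := (List.mem_filter.mp h1).2
      simp only [decide_eq_true_eq] at h2
      exact h2 hq
    have hcon := hkey _ hbasic hqf hent
    rw [sat_neg] at hcon
    apply hcon
    rw [hD, sat_diag]
    exact fun p _ => Iff.rfl
  obtain ⟨v', hvQ, hvα⟩ := hv'
  have hNmem : ∀ (w : MCS A P) (χ : Fm A P),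
      Sat (aug (canon A P) v' (fun i w => w ∈ DiSet L Q M s i)) (some w) χ ↔ χ ∈ w.s :=
    fun w χ => (((bm_some (canon A P) v' _).sat χ w).symm).trans (truth_lemma χ w)
  -- K1: replacing an arbitrary successor
  have K1 : ∀ (i : A) (t : M.S), M.R i s t → ∀ χ', (∀ q ∈ Q, q ∉ fvars χ') → ¬ Sat M t χ' →
      ∃ w ∈ DiSet L Q M s i, χ' ∉ w.s := by
    intro i t hRt χ' hqχ hnχ
    have hfs : FSat (insert (Fm.neg χ')
        ({β | Fm.box i β ∈ L} ∪
          {χ | (∀ q ∈ Q, q ∉ fvars χ) ∧ Sat M s (Fm.box i χ)})) := by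
      intro l hl
      set l₁ : List (Fm A P) := l.filter (fun e => decide (Fm.box i e ∈ L)) with hl₁
      set l₂ : List (Fm A P) := l.filter (fun e => decide (¬ (Fm.box i e ∈ L))) with hl₂
      have hl₂qf : ∀ e ∈ l₂, (∀ q ∈ Q, q ∉ fvars e) ∧ Sat M t e := by
        intro e he
        have heL : ¬ (Fm.box i e ∈ L) := by simpa using (List.mem_filter.mp he).2
        have heΓ := hl e (List.mem_of_mem_filter he)
        rcases Set.mem_insert_iff.mp heΓ with rfl | hmem
        · exact ⟨hqχ, fun hc => hnχ hc⟩
        · rcases hmem with hm1 | hm2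
          · exact absurd hm1 heL
          · exact ⟨hm2.1, hm2.2 t hRt⟩
      have hclaim : ∃ (K : KM A P) (k : K.S), Sat K k (conj l₁) ∧ Sat K k (conj l₂) := by
        by_contra hun
        have hE : Entails (conj L) (Fm.box i (Fm.neg (conj l₂))) := by
          intro K k hK u hu
          rw [sat_neg]
          intro hδ
          apply hun
          refine ⟨K, u, ?_, hδ⟩
          rw [sat_conj]
          intro e he
          have heL : Fm.box i e ∈ L := by simpa using (List.mem_filter.mp he).2
          exact ((sat_conj L).mp hK _ heL) u hu
        have hbasic : Basic (Fm.box i (Fm.neg (conj l₂))) := Or.inr (Or.inl ⟨i, _, rfl⟩)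
        have hqf : ∀ q ∈ Q, q ∉ fvars (Fm.box i (Fm.neg (conj l₂))) := by
          intro q hq hmem
          obtain ⟨e, he, hqe⟩ := fvars_conj q hmem
          exact (hl₂qf e he).1 q hq hqe
        have hcon := hkey _ hbasic hqf hE t hRt
        rw [sat_neg] at hcon
        apply hcon
        rw [sat_conj]
        exact fun e he => (hl₂qf e he).2
      obtain ⟨K, k, hk1, hk2⟩ := hclaim
      refine ⟨K, k, ?_⟩
      intro e he
      by_cases heL : Fm.box i e ∈ L
      · exact (sat_conj l₁).mp hk1 e (List.mem_filter.mpr ⟨he, by simpa using heL⟩)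
      · exact (sat_conj l₂).mp hk2 e (List.mem_filter.mpr ⟨he, by simpa using heL⟩)
    obtain ⟨w, hw⟩ := mcs_exists hfs
    refine ⟨w, ⟨?_, ?_⟩, ?_⟩
    · intro β hβ
      exact hw (Set.mem_insert_of_mem _ (Or.inl hβ))
    · intro χ hχq hχs
      exact hw (Set.mem_insert_of_mem _ (Or.inr ⟨hχq, hχs⟩))
    · exact (w.neg_mem χ').mp (hw (Set.mem_insert _ _))
  -- K2: diamond witnesses
  have K2 : ∀ (i : A) (γ : Fm A P), Fm.dia i γ ∈ L → ∃ w ∈ DiSet L Q M s i, γ ∈ w.s := by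
    intro i γ hγL
    have hfs : FSat (insert γ
        ({β | Fm.box i β ∈ L} ∪
          {χ | (∀ q ∈ Q, q ∉ fvars χ) ∧ Sat M s (Fm.box i χ)})) := by
      intro l hl
      set l₂ : List (Fm A P) := l.filter
        (fun e => decide (¬ (Fm.box i e ∈ L) ∧ (∀ q ∈ Q, q ∉ fvars e) ∧
          Sat M s (Fm.box i e))) with hl₂
      have hl₂p : ∀ e ∈ l₂, (∀ q ∈ Q, q ∉ fvars e) ∧ Sat M s (Fm.box i e) := by
        intro e he
        have h2 := (List.mem_filter.mp he).2
        simp only [decide_eq_true_eq] at h2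
        exact ⟨h2.2.1, h2.2.2⟩
      have hsbox : Sat M s (Fm.box i (conj l₂)) := by
        intro u hu
        rw [sat_conj]
        exact fun e he => (hl₂p e he).2 u hu
      have hclaim : ∃ (K : KM A P) (k : K.S), Sat K k γ ∧
          (∀ β, Fm.box i β ∈ L → Sat K k β) ∧ Sat K k (conj l₂) := by
        by_contra hun
        have hE : Entails (conj L) (Fm.dia i (Fm.neg (conj l₂))) := by
          intro K k hK
          have hdia : Sat K k (Fm.dia i γ) := (sat_conj L).mp hK _ hγL
          rw [sat_dia] at hdia
          obtain ⟨u, hu, huγ⟩ := hdia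
          rw [sat_dia]
          refine ⟨u, hu, ?_⟩
          rw [sat_neg]
          intro hδ
          exact hun ⟨K, u, huγ, fun β hβ => ((sat_conj L).mp hK _ hβ) u hu, hδ⟩
        have hbasic : Basic (Fm.dia i (Fm.neg (conj l₂))) := Or.inr (Or.inr ⟨i, _, rfl⟩)
        have hqf : ∀ q ∈ Q, q ∉ fvars (Fm.dia i (Fm.neg (conj l₂))) := by
          intro q hq hmem
          obtain ⟨e, he, hqe⟩ := fvars_conj q hmem
          exact (hl₂p e he).1 q hq hqe
        have hcon := hkey _ hbasic hqf hE
        rw [sat_dia] at hcon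
        obtain ⟨u, hu, hnδ⟩ := hcon
        exact hnδ (hsbox u hu)
      obtain ⟨K, k, hkγ, hkB, hk2⟩ := hclaim
      refine ⟨K, k, ?_⟩
      intro e he
      by_cases heL : Fm.box i e ∈ L
      · exact hkB e heL
      · rcases Set.mem_insert_iff.mp (hl e he) with rfl | hmem
        · exact hkγ
        · rcases hmem with hm1 | hm2
          · exact absurd hm1 heL
          · refine (sat_conj l₂).mp hk2 e (List.mem_filter.mpr ⟨he, ?_⟩)
            simp only [decide_eq_true_eq]
            exact ⟨heL, hm2.1, hm2.2⟩
    obtain ⟨w, hw⟩ := mcs_exists hfs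
    exact ⟨w, ⟨fun β hβ => hw (Set.mem_insert_of_mem _ (Or.inl hβ)),
      fun χ hχq hχs => hw (Set.mem_insert_of_mem _ (Or.inr ⟨hχq, hχs⟩))⟩,
      hw (Set.mem_insert _ _)⟩
  -- Assemble the model
  refine ⟨aug (canon A P) v' (fun i w => w ∈ DiSet L Q M s i), none, ?_, ?_⟩
  · refine (sat_conj L).mpr ?_
    intro c hcL
    rcases hterm c hcL with hp | ⟨i, β, rfl⟩ | ⟨i, γ, rfl⟩
    · exact (sat_isProp hp (fun p _ => Iff.rfl) :
        Sat (pmod v' : KM A P) () c ↔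
          Sat (aug (canon A P) v' (fun i w => w ∈ DiSet L Q M s i)) none c).mp (hvα c hcL hp)
    · refine aug_root_box_iff.mpr ?_
      intro w hw
      exact (truth_lemma β w).mpr (hw.1 β hcL)
    · obtain ⟨w, hwDi, hγ⟩ := K2 i γ hcL
      exact aug_root_dia_iff.mpr ⟨w, hwDi, (truth_lemma γ w).mpr hγ⟩
  · intro χ
    induction χ with
    | tru => intro _; exact Iff.rfl
    | var p =>
      intro hq
      have hpQ : p ∉ Q := fun hp => hq p hp rfl
      exact (hvQ p hpQ).symm
    | neg φ ih => intro hq; exact not_congr (ih hq)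
    | and φ χ ih1 ih2 =>
      intro hq
      exact and_congr (ih1 fun q hq' hm => hq q hq' (Set.mem_union_left _ hm))
        (ih2 fun q hq' hm => hq q hq' (Set.mem_union_right _ hm))
    | box i φ ih =>
      intro hq
      constructor
      · intro hb
        refine aug_root_box_iff.mpr ?_
        intro w hw
        exact (truth_lemma φ w).mpr (hw.2 φ hq hb)
      · intro hb
        by_contra hnb
        rw [sat_box] at hnb
        push_neg at hnb
        obtain ⟨t, ht, hnφ⟩ := hnb
        obtain ⟨w, hwDi, hφnw⟩ := K1 i t ht φ hq hnφ
        rw [aug_root_box_iff] at hb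
        exact hφnw ((truth_lemma φ w).mp (hb w hwDi))

theorem forgetting_separable_term_modular
    (L : List (Fm A P)) (hterm : EpTerm L) (hsep : LogSep L) (Q : Finset P)
    (F : Fm A P → Fm A P) (hF : ∀ χ : Fm A P, IsForget Q χ (F χ))
    (ψ : Fm A P) (hψ : IsForget Q (conj L) ψ) :
    FEquiv ψ (conj (L.map (fmap F))) := by
  obtain ⟨hent, hqf, hiff⟩ := hψ
  have step1 : Entails (conj L) (conj (L.map (fmap F))) := by
    intro K k hK
    rw [sat_conj]
    intro e he
    rw [List.mem_map] at he
    obtain ⟨c, hcL, rfl⟩ := he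
    have hc : Sat K k c := (sat_conj L).mp hK c hcL
    rcases hterm c hcL with hp | ⟨i, β, rfl⟩ | ⟨i, γ, rfl⟩
    · rw [fmap_isProp hp]
      exact (hF c).1 K k hc
    · rw [fmap_box]
      exact entails_box_mono i (hF β).1 K k hc
    · rw [fmap_dia]
      exact entails_dia_mono i (hF γ).1 K k hc
  have step2 : ∀ q ∈ Q, q ∉ fvars (conj (L.map (fmap F))) := by
    intro q hq hmem
    obtain ⟨e, he, hqe⟩ := fvars_conj q hmem
    rw [List.mem_map] at he
    obtain ⟨c, hcL, rfl⟩ := he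
    rcases hterm c hcL with hp | ⟨i, β, rfl⟩ | ⟨i, γ, rfl⟩
    · rw [fmap_isProp hp] at hqe
      exact (hF c).2.1 q hq hqe
    · exact (hF β).2.1 q hq hqe
    · exact (hF γ).2.1 q hq hqe
  have step3 : Entails (conj (L.map (fmap F))) ψ := by
    intro M s hsψ'
    obtain ⟨N, r, hNL, hagree⟩ := main_construct L hterm hsep Q F hF M s hsψ'
    exact (hagree ψ hqf).mpr (hent N r hNL)
  exact ⟨(hiff _ step2).mp step1, step3⟩
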